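/- arXiv:1411.7026 — 6 statements merged into one kernel-verified Lean document; each statement's English description precedes it below -/
import Mathlib

section
/- If L is a right Leibniz algebra над a field K with product [.,.], then L becomes a Leibniz triple system under the ternary product {x,y,z} := [[x,y],z]; that is, this trilinear product satisfies the two defining identities (L1) and (L2) of a Leibniz triple system. -/
/-- A right Leibniz algebra becomes a Leibniz triple system under {x,y,z} := [[x,y],z]. -/
theorem leibnizAlgebra_gives_leibnizTripleSystem
    {K L : Type*} [Field K] [AddCommGroup L] [Module K L]
    (b : L →ₗ[K] L →ₗ[K] L)
    (hLeib : ∀ x y z : L, b (b y z) x = b (b y x) z + b y (b z x)) :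
    (∀ a b' c d e : L,
      b (b a (b (b b' c) d)) e
        = b (b (b (b a b') c) d) e - b (b (b (b a c) b') d) e
          - b (b (b (b a d) b') c) e + b (b (b (b a d) c) b') e) ∧
    (∀ a b' c d e : L,
      b (b a b') (b (b c d) e)
        = b (b (b (b a b') c) d) e - b (b (b (b a b') d) c) e
          - b (b (b (b a b') e) c) d + b (b (b (b a b') e) d) c) := by
  have key : ∀ x y z : L, b y (b z x) = b (b y z) x - b (b y x) z := by
    intro x y z
    rw [hLeib x y z]; abel
  refine ⟨fun a b' c d e => ?_, fun a b' c d e => ?_⟩ <;>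
    simp only [key, map_sub, LinearMap.sub_apply] <;> abel
end

section
/- Let T be a Leibniz triple system over a field K. For all a,b,c,x,y in T, writing w = {a,b,c} − {a,c,b} + {b,c,a}, one has {x,y,w} = 0 and {x,w,y} = 0. -/
/-- In a Leibniz triple system, with w = {a,b,c} − {a,c,b} + {b,c,a}, one has
{x,y,w} = 0 and {x,w,y} = 0. -/
theorem leibnizTriple_generator_annihilated
    {K T : Type*} [Field K] [AddCommGroup T] [Module K T]
    (t : T →ₗ[K] T →ₗ[K] T →ₗ[K] T)
    (hL1 : ∀ a b c d e : T,
      t a (t b c d) e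
        = t (t a b c) d e - t (t a c b) d e - t (t a d b) c e + t (t a d c) b e)
    (hL2 : ∀ a b c d e : T,
      t a b (t c d e)
        = t (t a b c) d e - t (t a b d) c e - t (t a b e) c d + t (t a b e) d c) :
    ∀ a b c x y : T,
      t x y (t a b c - t a c b + t b c a) = 0 ∧
      t x (t a b c - t a c b + t b c a) y = 0 := by
  intro a b c x y
  constructor
  · simp only [map_sub, map_add, hL2 x y a b c, hL2 x y a c b, hL2 x y b c a]
    abel
  · simp only [map_sub, map_add, LinearMap.sub_apply, LinearMap.add_apply,
      hL1 x a b c y, hL1 x a c b y, hL1 x b c a y]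
    abel
end

section
/- Let T be a Leibniz triple system over a field K and let J be the smallest ideal of T containing all elements of the form {a,b,c} − {a,c,b} + {b,c,a} with a,b,c in T. Then J satisfies {T,T,J} = 0 and {T,J,T} = 0, i.e., {x,y,j} = 0 and {x,j,y} = 0 for all x,y in T and j in J. -/
/-- For the smallest ideal J of a Leibniz triple system containing all elements
{a,b,c} − {a,c,b} + {b,c,a}, one has {T,T,J} = 0 and {T,J,T} = 0. -/
theorem leibnizTriple_ideal_J_annihilated
    {K T : Type*} [Field K] [AddCommGroup T] [Module K T]
    (t : T →ₗ[K] T →ₗ[K] T →ₗ[K] T)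
    (hL1 : ∀ a b c d e : T,
      t a (t b c d) e
        = t (t a b c) d e - t (t a c b) d e - t (t a d b) c e + t (t a d c) b e)
    (hL2 : ∀ a b c d e : T,
      t a b (t c d e)
        = t (t a b c) d e - t (t a b d) c e - t (t a b e) c d + t (t a b e) d c)
    (J : Submodule K T)
    (hJideal : ∀ x ∈ J, ∀ y z : T, t x y z ∈ J ∧ t y x z ∈ J ∧ t y z x ∈ J)
    (hJgen : ∀ a b c : T, t a b c - t a c b + t b c a ∈ J)
    (hJmin : ∀ I : Submodule K T,
      (∀ x ∈ I, ∀ y z : T, t x y z ∈ I ∧ t y x z ∈ I ∧ t y z x ∈ I) →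
      (∀ a b c : T, t a b c - t a c b + t b c a ∈ I) → J ≤ I) :
    ∀ x y : T, ∀ j ∈ J, t x y j = 0 ∧ t x j y = 0 := by
  set I : Submodule K T :=
    { carrier := {j | ∀ x y : T, t x y j = 0 ∧ t x j y = 0}
      add_mem' := by
        intro a b ha hb x y
        constructor
        · simp [map_add, (ha x y).1, (hb x y).1]
        · simp [map_add, (ha x y).2, (hb x y).2]
      zero_mem' := by intro x y; simp
      smul_mem' := by
        intro c a ha x y
        constructor
        · simp [map_smul, (ha x y).1]
        · simp [map_smul, (ha x y).2] } with hI
  have hImem : ∀ j : T, j ∈ I ↔ ∀ x y : T, t x y j = 0 ∧ t x j y = 0 := by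
    intro j; rfl
  have hIideal : ∀ x ∈ I, ∀ y z : T, t x y z ∈ I ∧ t y x z ∈ I ∧ t y z x ∈ I := by
    intro j hj y z
    rw [hImem] at hj
    refine ⟨?_, ?_, ?_⟩
    · rw [hImem]
      intro x w
      constructor
      · rw [hL2 x w j y z, (hj x w).1, (hj (t x w y) z).2, (hj (t x w z) y).2,
          (hj (t x w z) y).1]
        simp
      · rw [hL1 x j y z w, (hj x y).2, (hj x y).1, (hj x z).1, (hj (t x z y) w).2]
        simp
    · rw [hImem]
      intro x w
      rw [(hj y z).2]
      simp
    · rw [hImem]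
      intro x w
      rw [(hj y z).1]
      simp
  have hIgen : ∀ a b c : T, t a b c - t a c b + t b c a ∈ I := by
    intro a b c
    rw [hImem]
    intro x y
    constructor
    · simp only [map_sub, map_add]
      rw [hL2 x y a b c, hL2 x y a c b, hL2 x y b c a]
      abel
    · have e1 := hL1 x a b c y
      have e2 := hL1 x a c b y
      have e3 := hL1 x b c a y
      simp only [map_sub, map_add, LinearMap.sub_apply, LinearMap.add_apply]
      rw [e1, e2, e3]
      abel
  intro x y j hj
  exact (hJmin I hIideal hIgen hj) x y
end

section
/- In any Leibniz triple system T over a field K, the identity {{c,d,e},b,a} − {{c,d,e},a,b} − {{c,b,a},d,e} + {{c,a,b},d,e} − {c,{a,b,d},e} − {c,d,{a,b,e}} = 0 holds for all a,b,c,d,e in T. -/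
/-- In any Leibniz triple system, the identity
{{c,d,e},b,a} − {{c,d,e},a,b} − {{c,b,a},d,e} + {{c,a,b},d,e} − {c,{a,b,d},e} − {c,d,{a,b,e}} = 0
holds. -/
theorem leibnizTriple_extra_identity
    {K T : Type*} [Field K] [AddCommGroup T] [Module K T]
    (t : T →ₗ[K] T →ₗ[K] T →ₗ[K] T)
    (hL1 : ∀ a b c d e : T,
      t a (t b c d) e
        = t (t a b c) d e - t (t a c b) d e - t (t a d b) c e + t (t a d c) b e)
    (hL2 : ∀ a b c d e : T,
      t a b (t c d e)
        = t (t a b c) d e - t (t a b d) c e - t (t a b e) c d + t (t a b e) d c) :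
    ∀ a b c d e : T,
      t (t c d e) b a - t (t c d e) a b - t (t c b a) d e + t (t c a b) d e
        - t c (t a b d) e - t c d (t a b e) = 0 := by
  intro a b c d e
  rw [hL1 c a b d e, hL2 c d a b e]
  abel
end

section
/- Let K be a field, V a K-vector space, and Λ¹, Λ⁰ subsets of V \ {0} that are both symmetric. Then the relation ∼ on Λ¹ defined by α ∼ β if and only if α and β are connected is an equivalence relation on Λ¹. -/
/-- A connection from `α` to `β` relative to the root sets `Λ1` and `Λ0`:
a sequence `f 0, f 1, …, f (2n)` (representing `α₁, …, α_{2n+1}`) of elements of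
`Λ1 ∪ {0}` starting at `α`, whose odd partial sums lie in `Λ1`, whose even partial
sums lie in `Λ0`, and whose total sum is `β` or `-β`. -/
def Connected {V : Type*} [AddCommGroup V] (Λ1 Λ0 : Set V) (α β : V) : Prop :=
  ∃ (n : ℕ) (f : ℕ → V),
    f 0 = α ∧
    (∀ i < 2 * n + 1, f i ∈ Λ1 ∪ {0}) ∧
    (∀ i ≤ n, (∑ j ∈ Finset.range (2 * i + 1), f j) ∈ Λ1) ∧
    (∀ i, 1 ≤ i → i ≤ n → (∑ j ∈ Finset.range (2 * i), f j) ∈ Λ0) ∧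
    ((∑ j ∈ Finset.range (2 * n + 1), f j) = β ∨
      (∑ j ∈ Finset.range (2 * n + 1), f j) = -β)

section Aux

variable {V : Type*} [AddCommGroup V] {Λ1 Λ0 : Set V}

lemma neg_mem_union {x : V} (hΛ1sym : ∀ α ∈ Λ1, -α ∈ Λ1)
    (hx : x ∈ Λ1 ∪ {0}) : -x ∈ Λ1 ∪ {0} := by
  rcases hx with hx | hx
  · exact Or.inl (hΛ1sym x hx)
  · simp only [Set.mem_singleton_iff] at hx
    subst hx; simp

lemma Connected.neg'
    (hΛ1sym : ∀ α ∈ Λ1, -α ∈ Λ1) (hΛ0sym : ∀ α ∈ Λ0, -α ∈ Λ0)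
    {α β : V} (h : Connected Λ1 Λ0 α β) : Connected Λ1 Λ0 (-α) β := by
  obtain ⟨n, f, hf0, hmem, hodd, heven, htot⟩ := h
  refine ⟨n, fun i => -(f i), by simp [hf0], ?_, ?_, ?_, ?_⟩
  · intro i hi
    exact neg_mem_union hΛ1sym (hmem i hi)
  · intro i hi
    simp only [Finset.sum_neg_distrib]
    exact hΛ1sym _ (hodd i hi)
  · intro i h1 h2
    simp only [Finset.sum_neg_distrib]
    exact hΛ0sym _ (heven i h1 h2)
  · simp only [Finset.sum_neg_distrib]
    rcases htot with h | h
    · right; rw [h]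
    · left; rw [h]; simp

lemma Connected.symm'
    (hΛ1sym : ∀ α ∈ Λ1, -α ∈ Λ1) (hΛ0sym : ∀ α ∈ Λ0, -α ∈ Λ0)
    {α β : V} (hβ : β ∈ Λ1) (h : Connected Λ1 Λ0 α β) : Connected Λ1 Λ0 β α := by
  obtain ⟨n, f, hf0, hmem, hodd, heven, htot⟩ := h
  set S := ∑ j ∈ Finset.range (2 * n + 1), f j with hS
  -- the reversed, negated connection, from S to α
  set g : ℕ → V := fun i => if i = 0 then S else -(f (2 * n + 1 - i)) with hg
  have key : ∀ m, 1 ≤ m → m ≤ 2 * n + 1 →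
      (∑ j ∈ Finset.range m, g j) = ∑ j ∈ Finset.range (2 * n + 2 - m), f j := by
    intro m hm1 hm2
    induction m with
    | zero => omega
    | succ m ih =>
      rcases Nat.eq_zero_or_pos m with h0 | h0
      · subst h0
        rw [Finset.sum_range_one]
        have hg0 : g 0 = S := if_pos rfl
        have he : 2 * n + 2 - 1 = 2 * n + 1 := by omega
        rw [hg0, hS, he]
      · have hm : 1 ≤ m := h0
        rw [Finset.sum_range_succ, ih hm (by omega)]
        have hgm : g m = -(f (2 * n + 1 - m)) := by
          simp [hg]; omega
        have h2 : 2 * n + 2 - m = (2 * n + 1 - m) + 1 := by omega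
        rw [hgm, h2, Finset.sum_range_succ]
        have h3 : 2 * n + 2 - (m + 1) = 2 * n + 1 - m := by omega
        rw [h3]; abel
  have hconn : Connected Λ1 Λ0 S α := by
    refine ⟨n, g, by simp [hg], ?_, ?_, ?_, ?_⟩
    · intro i hi
      rcases Nat.eq_zero_or_pos i with h0 | h0
      · subst h0
        simp only [hg, if_pos rfl]
        rcases htot with h | h
        · rw [h]; exact Or.inl hβ
        · rw [h]; exact Or.inl (hΛ1sym β hβ)
      · have hgi : g i = -(f (2 * n + 1 - i)) := by
          simp only [hg]
          rw [if_neg (by omega)]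
        rw [hgi]
        exact neg_mem_union hΛ1sym (hmem _ (by omega))
    · intro i hi
      rw [key (2 * i + 1) (by omega) (by omega)]
      have : 2 * n + 2 - (2 * i + 1) = 2 * (n - i) + 1 := by omega
      rw [this]
      exact hodd (n - i) (by omega)
    · intro i h1 h2
      rw [key (2 * i) (by omega) (by omega)]
      have : 2 * n + 2 - 2 * i = 2 * (n + 1 - i) := by omega
      rw [this]
      exact heven (n + 1 - i) (by omega) (by omega)
    · rw [key (2 * n + 1) (by omega) (by omega)]
      have : 2 * n + 2 - (2 * n + 1) = 1 := by omega
      rw [this]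
      left; simp [hf0]
  rcases htot with h | h
  · rw [h] at hconn
    exact hconn
  · rw [h] at hconn
    have := hconn.neg' hΛ1sym hΛ0sym
    rwa [neg_neg] at this

lemma Connected.trans'
    (hΛ1sym : ∀ α ∈ Λ1, -α ∈ Λ1) (hΛ0sym : ∀ α ∈ Λ0, -α ∈ Λ0)
    {α β γ : V} (h1 : Connected Λ1 Λ0 α β) (h2 : Connected Λ1 Λ0 β γ) :
    Connected Λ1 Λ0 α γ := by
  obtain ⟨n, f, hf0, hmem, hodd, heven, htot⟩ := h1
  -- adjust the second connection to start at the total sum of the first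
  set S := ∑ j ∈ Finset.range (2 * n + 1), f j with hS
  have h2' : Connected Λ1 Λ0 S γ := by
    rcases htot with h | h
    · rw [h]; exact h2
    · rw [h]; exact h2.neg' hΛ1sym hΛ0sym
  obtain ⟨m, g, hg0, hmem2, hodd2, heven2, htot2⟩ := h2'
  set h : ℕ → V := fun i => if i < 2 * n + 1 then f i else g (i - 2 * n) with hh
  have key1 : ∀ M ≤ 2 * n + 1, (∑ j ∈ Finset.range M, h j) = ∑ j ∈ Finset.range M, f j := by
    intro M hM
    apply Finset.sum_congr rfl
    intro j hj
    simp only [Finset.mem_range] at hj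
    simp only [hh]
    rw [if_pos (show j < 2 * n + 1 by omega)]
  have key2 : ∀ k, (∑ j ∈ Finset.range (2 * n + 1 + k), h j) = ∑ j ∈ Finset.range (k + 1), g j := by
    intro k
    induction k with
    | zero =>
      rw [show 2 * n + 1 + 0 = 2 * n + 1 from rfl, key1 _ le_rfl, Finset.sum_range_one, hg0]
    | succ k ih =>
      have he : 2 * n + 1 + (k + 1) = (2 * n + 1 + k) + 1 := by omega
      rw [he, Finset.sum_range_succ, ih]
      have hk : h (2 * n + 1 + k) = g (k + 1) := by
        simp only [hh]
        rw [if_neg (by omega)]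
        congr 1
        omega
      rw [hk]
      exact (Finset.sum_range_succ g (k + 1)).symm
  refine ⟨n + m, h, ?_, ?_, ?_, ?_, ?_⟩
  · simp [hh, hf0]
  · intro i hi
    by_cases hc : i < 2 * n + 1
    · simp only [hh, if_pos hc]
      exact hmem i hc
    · simp only [hh, if_neg hc]
      exact hmem2 (i - 2 * n) (by omega)
  · intro i hi
    by_cases hc : i ≤ n
    · rw [key1 _ (by omega)]
      exact hodd i hc
    · have : 2 * i + 1 = 2 * n + 1 + 2 * (i - n) := by omega
      rw [this, key2]
      exact hodd2 (i - n) (by omega)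
  · intro i hi1 hi2
    by_cases hc : i ≤ n
    · rw [key1 _ (by omega)]
      exact heven i hi1 hc
    · have he : 2 * i = 2 * n + 1 + (2 * (i - n) - 1) := by omega
      rw [he, key2]
      have : 2 * (i - n) - 1 + 1 = 2 * (i - n) := by omega
      rw [this]
      exact heven2 (i - n) (by omega) (by omega)
  · have : 2 * (n + m) + 1 = 2 * n + 1 + 2 * m := by omega
    rw [this, key2]
    exact htot2

end Aux

/-- If `Λ1` and `Λ0` are symmetric, the relation "being connected" is an equivalence
relation on `Λ1`. -/
theorem connected_equivalence
    {K V : Type*} [Field K] [AddCommGroup V] [Module K V]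
    (Λ1 Λ0 : Set V)
    (hΛ1ne : ∀ v ∈ Λ1, v ≠ 0) (hΛ0ne : ∀ v ∈ Λ0, v ≠ 0)
    (hΛ1sym : ∀ α ∈ Λ1, -α ∈ Λ1) (hΛ0sym : ∀ α ∈ Λ0, -α ∈ Λ0) :
    (∀ α ∈ Λ1, Connected Λ1 Λ0 α α) ∧
    (∀ α ∈ Λ1, ∀ β ∈ Λ1, Connected Λ1 Λ0 α β → Connected Λ1 Λ0 β α) ∧
    (∀ α ∈ Λ1, ∀ β ∈ Λ1, ∀ γ ∈ Λ1,
      Connected Λ1 Λ0 α β → Connected Λ1 Λ0 β γ → Connected Λ1 Λ0 α γ) := by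
  refine ⟨?_, ?_, ?_⟩
  · intro α hα
    exact ⟨0, fun _ => α, rfl, fun i _ => Or.inl hα,
      fun i hi => by interval_cases i; simpa using hα,
      fun i h1 h2 => by omega, Or.inl (by simp)⟩
  · intro α hα β hβ hab
    exact hab.symm' hΛ1sym hΛ0sym hβ
  · intro α hα β hβ γ hγ hab hbc
    exact hab.trans' hΛ1sym hΛ0sym hbc
end

section
/- Let K be a field, V a K-vector space, and Λ¹, Λ⁰ subsets of V \ {0} that are both symmetric. For α ∈ Λ¹ let Λ¹_α = {β ∈ Λ¹ : α and β are connected}. Then Λ¹_α is a root subsystem of Λ¹: (i) it is symmetric, i.e., β ∈ Λ¹_α implies −β ∈ Λ¹_α; and (ii) whenever β, γ, δ ∈ Λ¹_α ∪ {0} satisfy β+γ ∈ Λ⁰ and β+γ+δ ∈ Λ¹, then β+γ+δ ∈ Λ¹_α. -/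
lemma conn_neg {V : Type*} [AddCommGroup V] (Λ1 Λ0 : Set V) (α β : V)
    (h : Connected Λ1 Λ0 α β) : Connected Λ1 Λ0 α (-β) := by
  obtain ⟨n, f, h0, h1, h2, h3, h4⟩ := h
  refine ⟨n, f, h0, h1, h2, h3, ?_⟩
  rcases h4 with h | h
  · right; simpa using h
  · left; simpa using h

lemma conn_extend {V : Type*} [AddCommGroup V] (Λ1 Λ0 : Set V) (α β γ δ : V)
    (n : ℕ) (f : ℕ → V) (h0 : f 0 = α)
    (h1 : ∀ i < 2 * n + 1, f i ∈ Λ1 ∪ {0})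
    (h2 : ∀ i ≤ n, (∑ j ∈ Finset.range (2 * i + 1), f j) ∈ Λ1)
    (h3 : ∀ i, 1 ≤ i → i ≤ n → (∑ j ∈ Finset.range (2 * i), f j) ∈ Λ0)
    (hsum : (∑ j ∈ Finset.range (2 * n + 1), f j) = β)
    (hγ : γ ∈ Λ1 ∪ {0}) (hδ : δ ∈ Λ1 ∪ {0})
    (hβγ : β + γ ∈ Λ0) (hβγδ : β + γ + δ ∈ Λ1) :
    Connected Λ1 Λ0 α (β + γ + δ) := by
  set g : ℕ → V := fun i => if i = 2*n+1 then γ else if i = 2*n+2 then δ else f i with hg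
  have hgf : ∀ m, m ≤ 2*n+1 → (∑ j ∈ Finset.range m, g j) = ∑ j ∈ Finset.range m, f j := by
    intro m hm
    refine Finset.sum_congr rfl fun j hj => ?_
    have hj' := Finset.mem_range.mp hj
    simp only [hg]
    rw [if_neg (by omega), if_neg (by omega)]
  have hgγ : g (2*n+1) = γ := by simp [hg]
  have hgδ : g (2*(n+1)) = δ := by
    simp only [hg]
    rw [if_neg (by omega), if_pos (by omega)]
  have hS1 : (∑ j ∈ Finset.range (2*(n+1)), g j) = β + γ := by
    have e : 2*(n+1) = (2*n+1) + 1 := by ring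
    rw [e, Finset.sum_range_succ, hgf _ le_rfl, hsum, hgγ]
  have hS2 : (∑ j ∈ Finset.range (2*(n+1)+1), g j) = β + γ + δ := by
    rw [Finset.sum_range_succ, hS1, hgδ]
  refine ⟨n+1, g, ?_, ?_, ?_, ?_, Or.inl hS2⟩
  · simp only [hg]
    rw [if_neg (by omega), if_neg (by omega)]
    exact h0
  · intro i hi
    rcases Nat.lt_trichotomy i (2*n+1) with h | h | h
    · simp only [hg]
      rw [if_neg (by omega), if_neg (by omega)]
      exact h1 i h
    · rw [h, hgγ]; exact hγ
    · have hi2 : i = 2*(n+1) := by omega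
      rw [hi2, hgδ]; exact hδ
  · intro i hi
    rcases Nat.lt_or_ge i (n+1) with h | h
    · rw [hgf _ (by omega)]
      exact h2 i (by omega)
    · have : i = n+1 := by omega
      rw [this, hS2]; exact hβγδ
  · intro i hi1 hi2
    rcases Nat.lt_or_ge i (n+1) with h | h
    · rw [hgf _ (by omega)]
      exact h3 i hi1 (by omega)
    · have : i = n+1 := by omega
      rw [this, hS1]; exact hβγ

lemma conn_extend' {V : Type*} [AddCommGroup V] (Λ1 Λ0 : Set V)
    (hΛ1sym : ∀ α ∈ Λ1, -α ∈ Λ1) (hΛ0sym : ∀ α ∈ Λ0, -α ∈ Λ0)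
    (α β γ δ : V)
    (hconn : Connected Λ1 Λ0 α β)
    (hγ : γ ∈ Λ1 ∪ {0}) (hδ : δ ∈ Λ1 ∪ {0})
    (hβγ : β + γ ∈ Λ0) (hβγδ : β + γ + δ ∈ Λ1) :
    Connected Λ1 Λ0 α (β + γ + δ) := by
  have hneg : ∀ x ∈ Λ1 ∪ ({0} : Set V), -x ∈ Λ1 ∪ ({0} : Set V) := by
    rintro x (hx | hx)
    · exact Or.inl (hΛ1sym x hx)
    · right; simp [Set.mem_singleton_iff.mp hx]
  obtain ⟨n, f, h0, h1, h2, h3, h4⟩ := hconn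
  rcases h4 with hs | hs
  · exact conn_extend Λ1 Λ0 α β γ δ n f h0 h1 h2 h3 hs hγ hδ hβγ hβγδ
  · have key : Connected Λ1 Λ0 α (-β + -γ + -δ) := by
      refine conn_extend Λ1 Λ0 α (-β) (-γ) (-δ) n f h0 h1 h2 h3 hs
        (hneg γ hγ) (hneg δ hδ) ?_ ?_
      · have := hΛ0sym _ hβγ
        rwa [show -(β + γ) = -β + -γ by abel] at this
      · have := hΛ1sym _ hβγδ
        rwa [show -(β + γ + δ) = -β + -γ + -δ by abel] at this
    have h := conn_neg Λ1 Λ0 α _ key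
    rwa [show -(-β + -γ + -δ) = β + γ + δ by abel] at h

/-- If `Λ1` and `Λ0` are symmetric, then for each root `α ∈ Λ1` the set
`Λ¹_α = {β ∈ Λ1 : α and β are connected}` is a root subsystem of `Λ1`. -/
theorem connected_component_is_root_subsystem
    {K V : Type*} [Field K] [AddCommGroup V] [Module K V]
    (Λ1 Λ0 : Set V)
    (hΛ1ne : ∀ v ∈ Λ1, v ≠ 0) (hΛ0ne : ∀ v ∈ Λ0, v ≠ 0)
    (hΛ1sym : ∀ α ∈ Λ1, -α ∈ Λ1) (hΛ0sym : ∀ α ∈ Λ0, -α ∈ Λ0)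
    (α : V) (hα : α ∈ Λ1)
    (Λα : Set V) (hΛα : Λα = {β ∈ Λ1 | Connected Λ1 Λ0 α β}) :
    (∀ β ∈ Λα, -β ∈ Λα) ∧
    (∀ β γ δ : V, β ∈ Λα ∪ {0} → γ ∈ Λα ∪ {0} → δ ∈ Λα ∪ {0} →
      β + γ ∈ Λ0 → β + γ + δ ∈ Λ1 → β + γ + δ ∈ Λα) := by
  subst hΛα
  have hsub : ∀ x : V, x ∈ {β ∈ Λ1 | Connected Λ1 Λ0 α β} ∪ {0} → x ∈ Λ1 ∪ {0} := by
    rintro x (hx | hx)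
    · exact Or.inl hx.1
    · exact Or.inr hx
  constructor
  · rintro β ⟨hβ1, hβ2⟩
    exact ⟨hΛ1sym β hβ1, conn_neg _ _ _ _ hβ2⟩
  · rintro β γ δ hβ hγ hδ h0 h1
    refine ⟨h1, ?_⟩
    rcases hβ with hβ | hβ
    · exact conn_extend' Λ1 Λ0 hΛ1sym hΛ0sym α β γ δ hβ.2 (hsub γ hγ) (hsub δ hδ) h0 h1
    · have hβ0 : β = 0 := hβ
      rcases hγ with hγ | hγ
      · have key : Connected Λ1 Λ0 α (γ + 0 + δ) := by
          refine conn_extend' Λ1 Λ0 hΛ1sym hΛ0sym α γ 0 δ hγ.2 (Or.inr rfl) (hsub δ hδ) ?_ ?_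
          · simpa [hβ0] using h0
          · simpa [hβ0] using h1
        have e : β + γ + δ = γ + 0 + δ := by rw [hβ0]; abel
        rwa [e]
      · exfalso
        apply hΛ0ne 0 _ rfl
        simpa [hβ0, Set.mem_singleton_iff.mp hγ] using h0
end
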